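/- Suppose Y ⊆ ℕ, (ψ, E) is a Y-computable presentation of a total combinatory algebra, and f : ℕ → ℕ is a weak embedding of Kleene's first model K₁ into (ψ, E). Then for every pair of disjoint computably enumerable sets A, B ⊆ ℕ there exists a set C ⊆ ℕ whose characteristic function is recursive in Y such that A ⊆ C and B ∩ C = ∅. -/

import Mathlib

/-- Partial recursive functions relative to an oracle `O : ℕ →. ℕ`
(relativization of Mathlib's `Nat.Partrec`). -/
inductive RecursiveIn₁ (O : ℕ →. ℕ) : (ℕ →. ℕ) → Prop
  | zero : RecursiveIn₁ O (pure 0)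
  | succ : RecursiveIn₁ O ↑Nat.succ
  | left : RecursiveIn₁ O ↑fun n : ℕ => n.unpair.1
  | right : RecursiveIn₁ O ↑fun n : ℕ => n.unpair.2
  | oracle : RecursiveIn₁ O O
  | pair {f g} : RecursiveIn₁ O f → RecursiveIn₁ O g →
      RecursiveIn₁ O fun n => Nat.pair <$> f n <*> g n
  | comp {f g} : RecursiveIn₁ O f → RecursiveIn₁ O g →
      RecursiveIn₁ O fun n => g n >>= f
  | prec {f g} : RecursiveIn₁ O f → RecursiveIn₁ O g →
      RecursiveIn₁ O (Nat.unpaired fun a n =>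
        n.rec (f a) fun y IH => do let i ← IH; g (Nat.pair a (Nat.pair y i)))
  | rfind {f} : RecursiveIn₁ O f →
      RecursiveIn₁ O fun a => Nat.rfind fun n => (fun m => m = 0) <$> f (Nat.pair a n)

open scoped Classical in
/-- The characteristic function of a set `Y ⊆ ℕ`, as a partial function. -/
noncomputable def chi (Y : Set ℕ) : ℕ →. ℕ :=
  fun n => Part.some (if n ∈ Y then 1 else 0)

/-- The `e`-th partial computable function on `ℕ`. -/
def phi (e : ℕ) : ℕ →. ℕ :=
  Nat.Partrec.Code.eval (Denumerable.ofNat Nat.Partrec.Code e)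

/-- `(ψ, E)` is a `Y`-computable presentation of a total combinatory algebra:
`ψ` is total and recursive in `Y`, `E` is an equivalence relation decidable in `Y`
which is a congruence for `ψ`, and there are combinators `k`, `s`. -/
structure YPresentation (Y : Set ℕ) (ψ : ℕ → ℕ → ℕ) (E : ℕ → ℕ → Prop) : Prop where
  psi_rec : RecursiveIn₁ (chi Y) (fun n : ℕ => Part.some (ψ n.unpair.1 n.unpair.2))
  equiv : Equivalence E
  E_rec : RecursiveIn₁ (chi Y) (chi {n : ℕ | E n.unpair.1 n.unpair.2})
  congruence : ∀ {n n' m m'}, E n n' → E m m' → E (ψ n m) (ψ n' m')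
  comb : ∃ k s : ℕ, ∀ a b c : ℕ,
    E (ψ (ψ k a) b) a ∧ E (ψ (ψ (ψ s a) b) c) (ψ (ψ a c) (ψ b c))

/-- `f` is a weak embedding of Kleene's first model `K₁` into `(ψ, E)`. -/
def WeakEmb (ψ : ℕ → ℕ → ℕ) (E : ℕ → ℕ → Prop) (f : ℕ → ℕ) : Prop :=
  (∀ n m, E (f n) (f m) → n = m) ∧
  ∀ a b c : ℕ, phi a b = Part.some c → E (ψ (f a) (f b)) (f c)

theorem RecursiveIn₁.of_partrec {O : ℕ →. ℕ} {g : ℕ →. ℕ} (h : Nat.Partrec g) :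
    RecursiveIn₁ O g := by
  induction h with
  | zero => exact .zero
  | succ => exact .succ
  | left => exact .left
  | right => exact .right
  | pair _ _ ihf ihg => exact .pair ihf ihg
  | comp _ _ ihf ihg => exact .comp ihf ihg
  | prec _ _ ihf ihg => exact .prec ihf ihg
  | rfind _ ihf => exact .rfind ihf

theorem RecursiveIn₁.of_eq {O : ℕ →. ℕ} {g g' : ℕ →. ℕ} (h : RecursiveIn₁ O g)
    (H : ∀ n, g n = g' n) : RecursiveIn₁ O g' := (funext H : g = g') ▸ h

theorem RecursiveIn₁.of_primrec' {O : ℕ →. ℕ} {g : ℕ → ℕ} (h : Primrec g) :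
    RecursiveIn₁ O (fun n => Part.some (g n)) :=
  RecursiveIn₁.of_partrec (Nat.Partrec.of_primrec (Primrec.nat_iff.1 h))

theorem RecursiveIn₁.totalComp {O : ℕ →. ℕ} {F : ℕ →. ℕ} {g : ℕ → ℕ}
    (hF : RecursiveIn₁ O F) (hg : RecursiveIn₁ O (fun n => Part.some (g n))) :
    RecursiveIn₁ O (fun n => F (g n)) :=
  (RecursiveIn₁.comp hF hg).of_eq fun n => Part.bind_some _ _

/-- Internal numerals: `Tseq g t0 n = gⁿ(t0)`. -/
def Tseq (g : ℕ → ℕ) (t0 : ℕ) : ℕ → ℕ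
  | 0 => t0
  | n + 1 => g (Tseq g t0 n)

/-- The numeral sequence is recursive in the oracle whenever `g` is. -/
theorem Tseq_recIn {O : ℕ →. ℕ} {g : ℕ → ℕ} {t0 : ℕ}
    (hg : RecursiveIn₁ O (fun n => Part.some (g n))) :
    RecursiveIn₁ O (fun n => Part.some (Tseq g t0 n)) := by
  have hG : RecursiveIn₁ O (fun m => Part.some (g m.unpair.2.unpair.2)) :=
    hg.totalComp (RecursiveIn₁.of_primrec'
      ((Primrec.snd.comp Primrec.unpair).comp (Primrec.snd.comp Primrec.unpair)))
  have hF : RecursiveIn₁ O (fun _ : ℕ => Part.some t0) :=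
    RecursiveIn₁.of_primrec' (Primrec.const t0)
  have hP := RecursiveIn₁.prec hF hG
  have key : ∀ n : ℕ,
      (Nat.unpaired fun a n =>
        n.rec (Part.some t0) fun y IH => do
          let i ← IH
          (fun m => Part.some (g m.unpair.2.unpair.2)) (Nat.pair a (Nat.pair y i)))
        (Nat.pair 0 n) = Part.some (Tseq g t0 n) := by
    intro n
    induction n with
    | zero => simp [Tseq, Nat.unpaired]
    | succ n ih =>
      simp only [Nat.unpaired, Nat.unpair_pair] at ih ⊢
      rw [ih]
      simp [Tseq]
  have := hP.totalComp (O := O) (g := fun n => Nat.pair 0 n)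
    (RecursiveIn₁.of_primrec' (Primrec₂.natPair.comp (Primrec.const 0) Primrec.id))
  exact this.of_eq key

/-- If a total combinatory algebra has a `Y`-computable presentation `(ψ, E)`
and `K₁` weakly embeds into it, then every pair of disjoint c.e. sets is
separated by a set whose characteristic function is recursive in `Y`. -/
theorem completion_separates (Y : Set ℕ) (ψ : ℕ → ℕ → ℕ) (E : ℕ → ℕ → Prop)
    (hP : YPresentation Y ψ E) (f : ℕ → ℕ) (hf : WeakEmb ψ E f) :
    ∀ A B : Set ℕ, REPred (· ∈ A) → REPred (· ∈ B) → A ∩ B = ∅ →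
      ∃ C : Set ℕ, RecursiveIn₁ (chi Y) (chi C) ∧ A ⊆ C ∧ B ∩ C = ∅ := by
  intro A B hA hB hAB
  have hdisj : ∀ n, n ∈ A → n ∈ B → False := by
    intro n ha hb
    have : n ∈ A ∩ B := ⟨ha, hb⟩
    rw [hAB] at this
    exact this
  -- a code e with φ_e = 0 on A and 1 on B
  obtain ⟨k, hk, K⟩ :
      ∃ k : ℕ →. ℕ, Partrec k ∧ ∀ n x, x ∈ k n ↔
        (x ∈ (Part.assert (n ∈ A) fun _ => Part.some ()).map (fun _ => (0 : ℕ)) ∨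
         x ∈ (Part.assert (n ∈ B) fun _ => Part.some ()).map (fun _ => (1 : ℕ))) := by
    refine Partrec.merge (hA.map (Computable.const 0).to₂) (hB.map (Computable.const 1).to₂) ?_
    intro n x hx y hy
    simp only [Part.mem_map_iff, Part.mem_assert_iff] at hx hy
    obtain ⟨_, ⟨ha, -⟩, -⟩ := hx
    obtain ⟨_, ⟨hb, -⟩, -⟩ := hy
    exact absurd (hdisj n ha hb) (by simp)
  obtain ⟨c, hc⟩ := Nat.Partrec.Code.exists_code.1 (Partrec.nat_iff.1 hk)
  set e := Encodable.encode c with he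
  have hphie : phi e = k := by rw [phi, he, Denumerable.ofNat_encode, hc]
  have heA : ∀ n ∈ A, phi e n = Part.some 0 := by
    intro n hn
    rw [hphie]
    exact Part.eq_some_iff.2 ((K n 0).2 (Or.inl (by simp [Part.mem_map_iff, hn])))
  have heB : ∀ n ∈ B, phi e n = Part.some 1 := by
    intro n hn
    rw [hphie]
    exact Part.eq_some_iff.2 ((K n 1).2 (Or.inr (by simp [Part.mem_map_iff, hn])))
  -- a code for succ
  set a := Encodable.encode Nat.Partrec.Code.succ with ha
  have hphia : ∀ n : ℕ, phi a n = Part.some (n + 1) := by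
    intro n
    rw [phi, ha, Denumerable.ofNat_encode]
    rfl
  -- the numeral sequence
  set T : ℕ → ℕ := Tseq (fun m => ψ (f a) m) (f 0) with hT
  have hTE : ∀ n, E (T n) (f n) := by
    intro n
    induction n with
    | zero => exact hP.equiv.refl _
    | succ n ih =>
      have h1 : E (ψ (f a) (f n)) (f (n + 1)) := hf.2 a n (n + 1) (hphia n)
      have h2 : E (ψ (f a) (T n)) (ψ (f a) (f n)) :=
        hP.congruence (hP.equiv.refl _) ih
      exact hP.equiv.trans h2 h1
  refine ⟨{n | E (ψ (f e) (T n)) (f 0)}, ?_, ?_, ?_⟩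
  · -- recursiveness
    have hTrec : RecursiveIn₁ (chi Y) (fun n => Part.some (T n)) := by
      refine Tseq_recIn ?_
      have := hP.psi_rec.totalComp (g := fun m => Nat.pair (f a) m)
        (RecursiveIn₁.of_primrec' (Primrec₂.natPair.comp (Primrec.const (f a)) Primrec.id))
      exact this.of_eq fun n => by simp
    have hMid : RecursiveIn₁ (chi Y) (fun n => Part.some (ψ (f e) (T n))) := by
      have h1 : RecursiveIn₁ (chi Y) (fun n => Part.some (Nat.pair (f e) (T n))) := by
        have := (RecursiveIn₁.of_primrec' (O := chi Y)
          (Primrec₂.natPair.comp (Primrec.const (f e)) Primrec.id)).totalComp hTrec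
        exact this
      have := hP.psi_rec.totalComp (g := fun n => Nat.pair (f e) (T n)) h1
      exact this.of_eq fun n => by simp
    have hPair : RecursiveIn₁ (chi Y) (fun n => Part.some (Nat.pair (ψ (f e) (T n)) (f 0))) := by
      have := (RecursiveIn₁.of_primrec' (O := chi Y)
        (Primrec₂.natPair.comp Primrec.id (Primrec.const (f 0)))).totalComp hMid
      exact this
    have := hP.E_rec.totalComp (g := fun n => Nat.pair (ψ (f e) (T n)) (f 0)) hPair
    refine this.of_eq fun n => ?_
    have hmem : ((Nat.pair (ψ (f e) (T n)) (f 0)) ∈ {m : ℕ | E m.unpair.1 m.unpair.2})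
        = (n ∈ {m : ℕ | E (ψ (f e) (T m)) (f 0)}) := by
      simp [Set.mem_setOf_eq]
    simp only [chi]
    classical
    exact congrArg Part.some (if_congr (iff_of_eq hmem) rfl rfl)
  · -- A ⊆ C
    intro n hn
    have h1 : E (ψ (f e) (f n)) (f 0) := hf.2 e n 0 (heA n hn)
    have h2 : E (ψ (f e) (T n)) (ψ (f e) (f n)) :=
      hP.congruence (hP.equiv.refl _) (hTE n)
    exact hP.equiv.trans h2 h1
  · -- B ∩ C = ∅
    ext n
    simp only [Set.mem_inter_iff, Set.mem_setOf_eq, Set.mem_empty_iff_false, iff_false,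
      not_and]
    intro hnB hnC
    have h1 : E (ψ (f e) (f n)) (f 1) := hf.2 e n 1 (heB n hnB)
    have h2 : E (ψ (f e) (T n)) (ψ (f e) (f n)) :=
      hP.congruence (hP.equiv.refl _) (hTE n)
    have h3 : E (f 0) (f 1) :=
      hP.equiv.trans (hP.equiv.symm hnC) (hP.equiv.trans h2 h1)
    exact absurd (hf.1 0 1 h3) (by norm_num)
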